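/- Let f : [0,1] → [0,1]² be continuous with f(0) = (0,0) and f(1) = (1,1). Let a, r, s ∈ ℚ with 0 < r < s and cl B(f(a), s) ⊆ (0,1)², and let (r_n) and (s_n) be sequences of rationals with r < r₀ < r₁ < r₂ < ⋯ < s₂ < s₁ < s₀ < s. Let (J_n) be a sequence of intervals with rational endpoints such that L_{a,r_n} ∪ L_{a,s_n} ⊆ J_n and length(J_n) < 2^{-n} for all n. Then: (i) for all m < n, L_{a,r_n} ∪ L_{a,s_n} ⊆ J_m; (ii) each T_n := ⋂_{m ≤ n} cl J_m is a nonempty closed interval containing L_{a,r_n} ∪ L_{a,s_n} with length(T_n) < 2^{-n}; (iii) ⋂_n T_n is a singleton {β}, and β = lim_n q_{a,r_n}. -/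

import Mathlib

open Set

noncomputable section

/-- The Euclidean plane. -/
abbrev E2 := EuclideanSpace ℝ (Fin 2)

/-- The point `(x, y)` of the Euclidean plane. -/
def pt (x y : ℝ) : E2 := WithLp.toLp 2 ![x, y]

/-- The closed unit square `[0,1]²`. -/
def unitSq : Set E2 := {p | p 0 ∈ Icc (0:ℝ) 1 ∧ p 1 ∈ Icc (0:ℝ) 1}

/-- The open unit square `(0,1)²`. -/
def openUnitSq : Set E2 := {p | p 0 ∈ Ioo (0:ℝ) 1 ∧ p 1 ∈ Ioo (0:ℝ) 1}
open Filter Topology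

/-- `p_{a,r} = inf{ b ∈ (0,a) ∩ ℚ : f([b,a]) ⊆ B(f(a),r) }`. -/
def pTime (f : ℝ → E2) (a r : ℝ) : ℝ :=
  sInf {b : ℝ | (∃ q : ℚ, (q:ℝ) = b) ∧ b ∈ Ioo 0 a ∧
    MapsTo f (Icc b a) (Metric.ball (f a) r)}

/-- `q_{a,r} = sup{ b ∈ (a,1) ∩ ℚ : f([a,b]) ⊆ B(f(a),r) }`. -/
def qTime (f : ℝ → E2) (a r : ℝ) : ℝ :=
  sSup {b : ℝ | (∃ q : ℚ, (q:ℝ) = b) ∧ b ∈ Ioo a 1 ∧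
    MapsTo f (Icc a b) (Metric.ball (f a) r)}

/-- `p'_{a,r} = sup{ b ∈ (0,a) ∩ ℚ : f(b) ∉ cl B(f(a),r) }`. -/
def pTime' (f : ℝ → E2) (a r : ℝ) : ℝ :=
  sSup {b : ℝ | (∃ q : ℚ, (q:ℝ) = b) ∧ b ∈ Ioo 0 a ∧
    f b ∉ closure (Metric.ball (f a) r)}

/-- `q'_{a,r} = inf{ b ∈ (a,1) ∩ ℚ : f(b) ∉ cl B(f(a),r) }`. -/
def qTime' (f : ℝ → E2) (a r : ℝ) : ℝ :=
  sInf {b : ℝ | (∃ q : ℚ, (q:ℝ) = b) ∧ b ∈ Ioo a 1 ∧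
    f b ∉ closure (Metric.ball (f a) r)}

/-- `K_{a,r} = [p'_{a,r}, p_{a,r}]`. -/
def Kint (f : ℝ → E2) (a r : ℝ) : Set ℝ := Icc (pTime' f a r) (pTime f a r)

/-- `L_{a,r} = [q_{a,r}, q'_{a,r}]`. -/
def Lint (f : ℝ → E2) (a r : ℝ) : Set ℝ := Icc (qTime f a r) (qTime' f a r)

/-! ### Auxiliary definitions and lemmas -/

/-- The defining set of `qTime`. -/
def qSet (f : ℝ → E2) (a r : ℝ) : Set ℝ :=
  {b : ℝ | (∃ q : ℚ, (q:ℝ) = b) ∧ b ∈ Ioo a 1 ∧ MapsTo f (Icc a b) (Metric.ball (f a) r)}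

/-- The defining set of `qTime'`. -/
def qSet' (f : ℝ → E2) (a r : ℝ) : Set ℝ :=
  {b : ℝ | (∃ q : ℚ, (q:ℝ) = b) ∧ b ∈ Ioo a 1 ∧ f b ∉ closure (Metric.ball (f a) r)}

lemma qTime_eq (f : ℝ → E2) (a r : ℝ) : qTime f a r = sSup (qSet f a r) := rfl
lemma qTime'_eq (f : ℝ → E2) (a r : ℝ) : qTime' f a r = sInf (qSet' f a r) := rfl

lemma bddAbove_qSet (f : ℝ → E2) (a r : ℝ) : BddAbove (qSet f a r) :=
  ⟨1, fun _ hb => hb.2.1.2.le⟩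

lemma bddBelow_qSet' (f : ℝ → E2) (a r : ℝ) : BddBelow (qSet' f a r) :=
  ⟨a, fun _ hb => hb.2.1.1.le⟩

lemma qSet_nonempty {f : ℝ → E2} {a : ℝ} (hfc : ContinuousOn f (Icc 0 1))
    (ha : a ∈ Ioo (0:ℝ) 1) {r : ℝ} (hr : 0 < r) : (qSet f a r).Nonempty := by
  have hca : ContinuousWithinAt f (Icc 0 1) a := hfc a ⟨ha.1.le, ha.2.le⟩
  rw [Metric.continuousWithinAt_iff] at hca
  obtain ⟨δ, hδ, hδ'⟩ := hca r hr
  obtain ⟨b, hb1, hb2⟩ := exists_rat_btwn (lt_min ha.2 (by linarith : a < a + δ))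
  refine ⟨b, ⟨b, rfl⟩, ⟨hb1, hb2.trans_le (min_le_left _ _)⟩, fun x hx => ?_⟩
  have hx1 : x ∈ Icc (0:ℝ) 1 :=
    ⟨ha.1.le.trans hx.1, hx.2.trans ((hb2.le.trans (min_le_left _ _)))⟩
  refine hδ' hx1 ?_
  rw [Real.dist_eq, abs_lt]
  have := hb2.trans_le (min_le_right _ _)
  constructor <;> [linarith [hx.1]; linarith [hx.2]]

lemma qSet'_nonempty {f : ℝ → E2} {a : ℝ} (hfc : ContinuousOn f (Icc 0 1))
    (ha : a ∈ Ioo (0:ℝ) 1) {r : ℝ} (hr : r < dist (f 1) (f a)) : (qSet' f a r).Nonempty := by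
  have hca : ContinuousWithinAt f (Icc 0 1) 1 := hfc 1 ⟨by norm_num, le_rfl⟩
  rw [Metric.continuousWithinAt_iff] at hca
  obtain ⟨δ, hδ, hδ'⟩ := hca (dist (f 1) (f a) - r) (by linarith)
  obtain ⟨b, hb1, hb2⟩ := exists_rat_btwn (max_lt ha.2 (by linarith : 1 - δ < 1))
  have hab : a < (b:ℝ) := (le_max_left _ _).trans_lt hb1
  refine ⟨b, ⟨b, rfl⟩, ⟨hab, hb2⟩, fun hmem => ?_⟩
  have hclose : dist (f b) (f 1) < dist (f 1) (f a) - r := by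
    refine hδ' ⟨ha.1.le.trans hab.le, hb2.le⟩ ?_
    rw [Real.dist_eq, abs_lt]
    have := (le_max_right _ _).trans_lt hb1
    constructor <;> linarith
  have hdb : dist (f b) (f a) ≤ r := by
    have := Metric.closure_ball_subset_closedBall hmem
    rwa [Metric.mem_closedBall] at this
  have htri : dist (f 1) (f a) ≤ dist (f 1) (f b) + dist (f b) (f a) := dist_triangle _ _ _
  rw [dist_comm (f 1) (f b)] at htri
  linarith

lemma qSet_lt_qSet' {f : ℝ → E2} {a r r' : ℝ} (hrr : r ≤ r') {b b' : ℝ}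
    (hb : b ∈ qSet f a r) (hb' : b' ∈ qSet' f a r') : b < b' := by
  by_contra h
  push_neg at h
  exact hb'.2.2 (subset_closure (Metric.ball_subset_ball hrr (hb.2.2 ⟨hb'.2.1.1.le, h⟩)))

lemma qTime_le_qTime' {f : ℝ → E2} {a r r' : ℝ} (hrr : r ≤ r')
    (hne : (qSet f a r).Nonempty) (hne' : (qSet' f a r').Nonempty) :
    qTime f a r ≤ qTime' f a r' :=
  csSup_le hne fun _ hb => le_csInf hne' fun _ hb' => (qSet_lt_qSet' hrr hb hb').le

lemma qTime_mono {f : ℝ → E2} {a r r' : ℝ} (hrr : r ≤ r') (hne : (qSet f a r).Nonempty) :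
    qTime f a r ≤ qTime f a r' :=
  csSup_le_csSup (bddAbove_qSet f a r') hne fun b hb =>
    ⟨hb.1, hb.2.1, hb.2.2.mono_right (Metric.ball_subset_ball hrr)⟩

lemma qTime'_mono {f : ℝ → E2} {a r r' : ℝ} (hrr : r ≤ r') (hne' : (qSet' f a r').Nonempty) :
    qTime' f a r ≤ qTime' f a r' :=
  csInf_le_csInf (bddBelow_qSet' f a r) hne' fun b hb =>
    ⟨hb.1, hb.2.1, fun hc => hb.2.2 (closure_mono (Metric.ball_subset_ball hrr) hc)⟩

/-- The nested rational intervals `J_n` trapping the exit intervals `L` shrink to a single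
point `β`, which is the limit of the exit times `q_{a,r_n}`. -/
theorem trapping_intervals_converge (f : ℝ → E2)
    (hfc : ContinuousOn f (Icc 0 1)) (hfm : MapsTo f (Icc 0 1) unitSq)
    (hf0 : f 0 = pt 0 0) (hf1 : f 1 = pt 1 1)
    (a r s : ℚ) (ha : (a:ℝ) ∈ Ioo (0:ℝ) 1) (hr : (0:ℝ) < r) (hrs : (r:ℝ) < s)
    (hball : closure (Metric.ball (f a) s) ⊆ openUnitSq)
    (rn sn : ℕ → ℚ) (hr0 : r < rn 0) (hrmono : StrictMono rn) (hsanti : StrictAnti sn)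
    (hrsn : ∀ n m, rn n < sn m) (hs0 : sn 0 < s)
    (cJ dJ : ℕ → ℚ)
    (hJ : ∀ n, Lint f a (rn n) ∪ Lint f a (sn n) ⊆ Ioo (cJ n : ℝ) (dJ n))
    (hJlen : ∀ n, (dJ n : ℝ) - cJ n < 2⁻¹ ^ n) :
    (∀ m n, m < n → Lint f a (rn n) ∪ Lint f a (sn n) ⊆ Ioo (cJ m : ℝ) (dJ m)) ∧
    (∀ n : ℕ, ∃ u v : ℝ, u ≤ v ∧
      (⋂ m ≤ n, closure (Ioo (cJ m : ℝ) (dJ m))) = Icc u v ∧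
      Lint f a (rn n) ∪ Lint f a (sn n) ⊆ Icc u v ∧ v - u < 2⁻¹ ^ n) ∧
    (∃ β : ℝ, (⋂ n : ℕ, ⋂ m ≤ n, closure (Ioo (cJ m : ℝ) (dJ m))) = {β} ∧
      Tendsto (fun n => qTime f a (rn n)) atTop (𝓝 β)) := by
  -- basic inequalities
  have hrpos : ∀ n, (0:ℝ) < rn n := fun n => by
    have h : r < rn n := hr0.trans_le (hrmono.monotone (Nat.zero_le n))
    exact hr.trans (by exact_mod_cast h)
  have hspos : ∀ n, (0:ℝ) < sn n := fun n => (hrpos n).trans (by exact_mod_cast hrsn n n)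
  have hsn_lt_s : ∀ n, (sn n : ℝ) < s := fun n => by
    exact_mod_cast lt_of_le_of_lt (hsanti.antitone (Nat.zero_le n)) hs0
  have hrn_lt_s : ∀ n, (rn n : ℝ) < s := fun n => by
    exact_mod_cast (hrsn n n).trans_le ((hsanti.antitone (Nat.zero_le n)).trans hs0.le)
  -- dist (f 1) (f a) > s
  have hf1not : f 1 ∉ closure (Metric.ball (f (a:ℝ)) (s:ℝ)) := by
    intro h
    have := (hball h).2
    rw [hf1] at this
    simp [pt, Matrix.cons_val_one, Matrix.head_cons] at this
  have hspos' : (0:ℝ) < s := hr.trans hrs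
  have hdist : (s:ℝ) < dist (f 1) (f (a:ℝ)) := by
    by_contra h
    push_neg at h
    exact hf1not (by rw [closure_ball _ (ne_of_gt hspos')]; exact Metric.mem_closedBall.mpr h)
  -- nonemptiness
  have hner : ∀ n, (qSet f (a:ℝ) ((rn n : ℝ))).Nonempty := fun n => qSet_nonempty hfc ha (hrpos n)
  have hnes : ∀ n, (qSet f (a:ℝ) ((sn n : ℝ))).Nonempty := fun n => qSet_nonempty hfc ha (hspos n)
  have hner' : ∀ n, (qSet' f (a:ℝ) ((rn n : ℝ))).Nonempty := fun n =>
    qSet'_nonempty hfc ha ((hrn_lt_s n).trans hdist)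
  have hnes' : ∀ n, (qSet' f (a:ℝ) ((sn n : ℝ))).Nonempty := fun n =>
    qSet'_nonempty hfc ha ((hsn_lt_s n).trans hdist)
  set qn : ℕ → ℝ := fun n => qTime f a (rn n) with hqn
  set Qn : ℕ → ℝ := fun n => qTime' f a (sn n) with hQn
  -- L union ⊆ Icc (qn n) (Qn n)
  have hrn_le_sn : ∀ n, (rn n : ℝ) ≤ sn n := fun n => (by exact_mod_cast (hrsn n n).le)
  have hLsub : ∀ n, Lint f a (rn n) ∪ Lint f a (sn n) ⊆ Icc (qn n) (Qn n) := by
    intro n x hx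
    rcases hx with hx | hx
    · exact ⟨hx.1, hx.2.trans (qTime'_mono (hrn_le_sn n) (hnes' n))⟩
    · exact ⟨(qTime_mono (hrn_le_sn n) (hner n)).trans hx.1, hx.2⟩
  have hqQ : ∀ n, qn n ≤ Qn n := fun n =>
    qTime_le_qTime' (hrn_le_sn n) (hner n) (hnes' n)
  have hqmem : ∀ n, qn n ∈ Lint f a (rn n) :=
    fun n => ⟨le_rfl, qTime_le_qTime' le_rfl (hner n) (hner' n)⟩
  have hQmem : ∀ n, Qn n ∈ Lint f a (sn n) :=
    fun n => ⟨qTime_le_qTime' le_rfl (hnes n) (hnes' n), le_rfl⟩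
  -- monotonicity of the Icc's
  have hqn_mono : Monotone qn := fun m n hmn =>
    qTime_mono (by exact_mod_cast (hrmono.monotone hmn)) (hner m)
  have hQn_anti : Antitone Qn := fun m n hmn =>
    qTime'_mono (by exact_mod_cast (hsanti.antitone hmn)) (hnes' m)
  -- the Icc's are in the Ioo's
  have hIccJ : ∀ n, Icc (qn n) (Qn n) ⊆ Ioo (cJ n : ℝ) (dJ n) := by
    intro n
    have h1 : qn n ∈ Ioo (cJ n : ℝ) (dJ n) := hJ n (Or.inl (hqmem n))
    have h2 : Qn n ∈ Ioo (cJ n : ℝ) (dJ n) := hJ n (Or.inr (hQmem n))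
    exact (ordConnected_Ioo).out h1 h2
  -- part (i)
  have part1 : ∀ m n, m ≤ n → Lint f a (rn n) ∪ Lint f a (sn n) ⊆ Ioo (cJ m : ℝ) (dJ m) := by
    intro m n hmn
    refine (hLsub n).trans (Icc_subset_Icc (hqn_mono hmn) (hQn_anti hmn) |>.trans (hIccJ m))
  have hcd : ∀ m, (cJ m : ℝ) < dJ m := fun m => ((hJ m (Or.inl (hqmem m))).1).trans (hJ m (Or.inl (hqmem m))).2
  have hclo : ∀ m, closure (Ioo (cJ m : ℝ) (dJ m)) = Icc (cJ m : ℝ) (dJ m) :=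
    fun m => closure_Ioo (ne_of_lt (hcd m))
  have hqnIcc : ∀ m n, m ≤ n → qn n ∈ Icc (cJ m : ℝ) (dJ m) := by
    intro m n hmn
    exact Ioo_subset_Icc_self (part1 m n hmn (Or.inl (hqmem n)))
  refine ⟨fun m n hmn => part1 m n hmn.le, ?_, ?_⟩
  · -- part (ii)
    intro n
    have hrange : (Finset.range (n+1)).Nonempty := Finset.nonempty_range_add_one
    refine ⟨(Finset.range (n+1)).sup' hrange (fun m => (cJ m : ℝ)),
      (Finset.range (n+1)).inf' hrange (fun m => (dJ m : ℝ)), ?_, ?_, ?_, ?_⟩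
    · refine le_trans (b := qn n) (Finset.sup'_le _ _ fun m hm => ?_)
        (Finset.le_inf' _ _ fun m hm => ?_) <;>
      · have := hqnIcc m n (Nat.lt_succ_iff.mp (Finset.mem_range.mp hm))
        first
          | exact this.1
          | exact this.2
    · ext x
      simp only [mem_iInter, hclo, mem_Icc, Finset.sup'_le_iff, Finset.le_inf'_iff,
        Finset.mem_range, Nat.lt_succ_iff]
      constructor
      · intro h
        exact ⟨fun m hm => (h m hm).1, fun m hm => (h m hm).2⟩
      · intro h m hm
        exact ⟨h.1 m hm, h.2 m hm⟩
    · intro x hx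
      constructor
      · exact Finset.sup'_le _ _ fun m hm =>
          (Ioo_subset_Icc_self (part1 m n (Nat.lt_succ_iff.mp (Finset.mem_range.mp hm)) hx)).1
      · exact Finset.le_inf' _ _ fun m hm =>
          (Ioo_subset_Icc_self (part1 m n (Nat.lt_succ_iff.mp (Finset.mem_range.mp hm)) hx)).2
    · have h1 : (cJ n : ℝ) ≤ (Finset.range (n+1)).sup' hrange (fun m => (cJ m : ℝ)) :=
        Finset.le_sup' (fun m => ((cJ m : ℝ))) (Finset.self_mem_range_succ n)
      have h2 : (Finset.range (n+1)).inf' hrange (fun m => (dJ m : ℝ)) ≤ dJ n :=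
        Finset.inf'_le (fun m => ((dJ m : ℝ))) (Finset.self_mem_range_succ n)
      linarith [hJlen n]
  · -- part (iii)
    have hbdd : BddAbove (Set.range qn) := by
      refine ⟨1, fun x ⟨n, hn⟩ => ?_⟩
      rw [← hn]
      exact csSup_le (hner n) fun b hb => hb.2.1.2.le
    set β : ℝ := ⨆ n, qn n with hβ
    have htend : Tendsto qn atTop (𝓝 β) := tendsto_atTop_ciSup hqn_mono hbdd
    have hqβ : ∀ n, qn n ≤ β := fun n => le_ciSup hbdd n
    have hβIcc : ∀ m, β ∈ Icc (cJ m : ℝ) (dJ m) := by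
      intro m
      constructor
      · exact (hqnIcc m m le_rfl).1.trans (hqβ m)
      · refine ciSup_le fun n => ?_
        rcases le_or_gt m n with h | h
        · exact (hqnIcc m n h).2
        · exact (hqn_mono h.le).trans (hqnIcc m m le_rfl).2
    have hset : (⋂ n : ℕ, ⋂ m ≤ n, closure (Ioo (cJ m : ℝ) (dJ m)))
        = ⋂ m : ℕ, Icc (cJ m : ℝ) (dJ m) := by
      ext x
      simp only [mem_iInter, hclo]
      exact ⟨fun h m => h m m le_rfl, fun h n m _ => h m⟩
    refine ⟨β, ?_, htend⟩
    rw [hset]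
    ext x
    simp only [mem_iInter, mem_singleton_iff]
    constructor
    · intro h
      by_contra hne
      obtain ⟨m, hm⟩ := exists_pow_lt_of_lt_one (abs_pos.mpr (sub_ne_zero.mpr hne))
        (by norm_num : (2:ℝ)⁻¹ < 1)
      have hx := h m
      have hb := hβIcc m
      have : |x - β| ≤ (dJ m : ℝ) - cJ m := abs_sub_le_iff.mpr ⟨by linarith [hx.1, hx.2, hb.1, hb.2], by linarith [hx.1, hx.2, hb.1, hb.2]⟩
      linarith [hJlen m]
    · rintro rfl
      exact hβIcc
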